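/- Let x, y, a, b be vertices of the tree T and suppose that a and b lie in the same connected component of the graph obtained from T by deleting any edge of the geodesic edge-path from x to y (equivalently, no edge of the geodesic path from x to y separates a from b). If moreover a = b, then ⟨c_z(x,y)δ_b, δ_a⟩ = w^ℓ for all z ∈ 𝔻, where ℓ is the number of edges of the geodesic path from x to y that are incident to the vertex a; and if a ≠ b, then for each edge of the geodesic path from x to y, a and b lie on the same side of that edge and ⟨c_z(x,y)δ_b, δ_a⟩ = 0 for all z ∈ 𝔻. -/

import Mathlib

noncomputable section

open scoped ComplexConjugate

/-- `ℓ²(X)`: the Hilbert space of square-summable complex functions on `X`. -/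
abbrev ell2 (X : Type) : Type := lp (fun _ : X => ℂ) 2

/-- The Dirac function `δ_v` at a vertex `v`. -/
noncomputable def delta {X : Type} [DecidableEq X] (v : X) : ell2 X :=
  lp.single 2 v (1 : ℂ)

/-- `w = √(1 − z²)`, using the principal branch of the square root, which is
holomorphic off the negative real axis and positive on the positive reals. -/
noncomputable def W (z : ℂ) : ℂ := (1 - z ^ 2) ^ ((1 : ℂ) / 2)

/-- The defining property of the edge operator `c_z(x,y)` for adjacent vertices
`x, y`: it sends `δ_x ↦ wδ_x − zδ_y`, `δ_y ↦ wδ_y + zδ_x`, and fixes `δ_v` for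
every other vertex `v`. -/
def IsEdgeOp {X : Type} [DecidableEq X] (z : ℂ) (x y : X)
    (A : ell2 X →L[ℂ] ell2 X) : Prop :=
  A (delta x) = W z • delta x - z • delta y ∧
  A (delta y) = W z • delta y + z • delta x ∧
  ∀ v : X, v ≠ x → v ≠ y → A (delta v) = delta v

/-- The product `f(v₀,v₁) * f(v₁,v₂) * ⋯ * f(v_{n−1},v_n)` along a walk
`v₀, v₁, …, v_n`. -/
def walkProd {X : Type} {T : SimpleGraph X} {E : Type} [Monoid E]
    (f : X → X → E) : {a b : X} → T.Walk a b → E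
  | _, _, SimpleGraph.Walk.nil => 1
  | _, _, SimpleGraph.Walk.cons (u := u) (v := v) _ p => f u v * walkProd f p


section AuxAnalytic
variable {X : Type} [DecidableEq X]

lemma inner_delta (a b : X) : (inner ℂ (delta a) (delta b) : ℂ) = if a = b then 1 else 0 := by
  rw [delta, delta, lp.inner_single_left]
  by_cases h : a = b
  · subst h; simp [lp.single_apply_self]
  · simp [h, lp.single_apply_ne _ _ _ h]

lemma clm_ext_delta (L R : ell2 X →L[ℂ] ℂ) (h : ∀ w : X, L (delta w) = R (delta w)) (η : ell2 X) :
    L η = R η := by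
  have hs : HasSum (fun w : X => lp.single 2 w (η w)) η :=
    lp.hasSum_single (by norm_num) η
  have key : ∀ w : X, L (lp.single 2 w (η w)) = R (lp.single 2 w (η w)) := by
    intro w
    have e : lp.single 2 w (η w) = (η w : ℂ) • delta w := by
      rw [delta, ← lp.single_smul]; norm_num
    rw [e, map_smul, map_smul, h w]
  exact (hs.mapL L).unique (by simpa only [key] using hs.mapL R)

lemma edge_inner_other {z : ℂ} {u v : X} {A : ell2 X →L[ℂ] ell2 X} (hA : IsEdgeOp z u v A)
    (a : X) (hau : a ≠ u) (hav : a ≠ v) (η : ell2 X) :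
    (inner ℂ (delta a) (A η) : ℂ) = inner ℂ (delta a) η := by
  refine clm_ext_delta ((innerSL ℂ (delta a)).comp A) (innerSL ℂ (delta a)) ?_ η
  intro w
  simp only [ContinuousLinearMap.comp_apply, innerSL_apply_apply]
  by_cases hwu : w = u
  · subst hwu
    rw [hA.1]
    simp [inner_sub_right, inner_smul_right, inner_delta, hau, hav]
  by_cases hwv : w = v
  · subst hwv
    rw [hA.2.1]
    simp [inner_add_right, inner_smul_right, inner_delta, hau, hav]
  · rw [hA.2.2 w hwu hwv]

lemma edge_inner_left {z : ℂ} {u v : X} {A : ell2 X →L[ℂ] ell2 X} (hA : IsEdgeOp z u v A)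
    (huv : u ≠ v) (η : ell2 X) :
    (inner ℂ (delta u) (A η) : ℂ) = W z * inner ℂ (delta u) η + z * inner ℂ (delta v) η := by
  refine clm_ext_delta ((innerSL ℂ (delta u)).comp A)
    (W z • innerSL ℂ (delta u) + z • innerSL ℂ (delta v)) ?_ η
  intro w
  simp only [ContinuousLinearMap.comp_apply, innerSL_apply_apply, ContinuousLinearMap.add_apply,
    ContinuousLinearMap.smul_apply, smul_eq_mul]
  by_cases hwu : w = u
  · subst hwu
    rw [hA.1]
    simp [inner_sub_right, inner_smul_right, inner_delta, huv, huv.symm]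
  by_cases hwv : w = v
  · subst hwv
    rw [hA.2.1]
    simp [-inner_self_eq_norm_sq_to_K, inner_add_right, inner_smul_right, inner_delta, huv, huv.symm]
  · rw [hA.2.2 w hwu hwv]
    simp [inner_delta, Ne.symm hwu, Ne.symm hwv]

lemma edge_inner_right {z : ℂ} {u v : X} {A : ell2 X →L[ℂ] ell2 X} (hA : IsEdgeOp z u v A)
    (huv : u ≠ v) (η : ell2 X) :
    (inner ℂ (delta v) (A η) : ℂ) = W z * inner ℂ (delta v) η - z * inner ℂ (delta u) η := by
  refine clm_ext_delta ((innerSL ℂ (delta v)).comp A)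
    (W z • innerSL ℂ (delta v) - z • innerSL ℂ (delta u)) ?_ η
  intro w
  simp only [ContinuousLinearMap.comp_apply, innerSL_apply_apply, ContinuousLinearMap.sub_apply,
    ContinuousLinearMap.smul_apply, smul_eq_mul]
  by_cases hwu : w = u
  · subst hwu
    rw [hA.1]
    simp [-inner_self_eq_norm_sq_to_K, inner_sub_right, inner_smul_right, inner_delta, huv, huv.symm]
  by_cases hwv : w = v
  · subst hwv
    rw [hA.2.1]
    simp [inner_add_right, inner_smul_right, inner_delta, huv, huv.symm]
  · rw [hA.2.2 w hwu hwv]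
    simp [inner_delta, Ne.symm hwu, Ne.symm hwv]

end AuxAnalytic

section AuxDist
variable {X : Type} {T : SimpleGraph X}

lemma getVert_dist_le (hconn : T.Connected) :
    ∀ {x y : X} (p : T.Walk x y) (i j : ℕ), i ≤ j →
      T.dist (p.getVert i) (p.getVert j) ≤ j - i := by
  intro x y p
  induction p with
  | nil => intro i j _; simp [SimpleGraph.Walk.getVert, SimpleGraph.dist_self]
  | cons h q ih =>
    intro i j hij
    match i, j with
    | 0, 0 => simp [SimpleGraph.dist_self]
    | 0, (j + 1) =>
      rw [SimpleGraph.Walk.getVert_zero, SimpleGraph.Walk.getVert_cons_succ]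
      calc T.dist _ _ ≤ T.dist _ _ + T.dist _ (q.getVert j) := hconn.dist_triangle
        _ ≤ 1 + j := by
            gcongr
            · exact le_trans (SimpleGraph.dist_le h.toWalk) (by simp)
            · simpa using ih 0 j (Nat.zero_le _)
        _ ≤ (j + 1) - 0 := by omega
    | (i + 1), (j + 1) =>
      rw [SimpleGraph.Walk.getVert_cons_succ, SimpleGraph.Walk.getVert_cons_succ]
      simpa using ih i j (by omega)

lemma getVert_dist_eq (hconn : T.Connected) {x y : X} (p : T.Walk x y)
    (hp : p.length = T.dist x y) (i j : ℕ) (hij : i ≤ j) (hj : j ≤ p.length) :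
    T.dist (p.getVert i) (p.getVert j) = j - i := by
  refine le_antisymm (getVert_dist_le hconn p i j hij) ?_
  have t1 : T.dist x y ≤ T.dist x (p.getVert i) + T.dist (p.getVert i) y :=
    hconn.dist_triangle
  have t2 : T.dist (p.getVert i) y ≤
      T.dist (p.getVert i) (p.getVert j) + T.dist (p.getVert j) y :=
    hconn.dist_triangle
  have e1 : T.dist x (p.getVert i) ≤ i := by
    simpa [p.getVert_zero] using getVert_dist_le hconn p 0 i (Nat.zero_le _)
  have e3 : T.dist (p.getVert j) y ≤ p.length - j := by
    simpa [p.getVert_length] using getVert_dist_le hconn p j p.length hj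
  omega

end AuxDist

lemma card_shift (n : ℕ) (Q : ℕ → Prop) [DecidablePred Q] :
    ((Finset.range (n + 1)).filter Q).card =
      (if Q 0 then 1 else 0) + ((Finset.range n).filter (fun i => Q (i + 1))).card := by
  rw [Finset.card_filter, Finset.card_filter, Finset.sum_range_succ']
  exact add_comm _ _

lemma main_lemma {X : Type} [DecidableEq X] {T : SimpleGraph X} (hconn : T.Connected)
    (z : ℂ) (c : X → X → (ell2 X →L[ℂ] ell2 X))
    (hedge : ∀ u v : X, T.Adj u v → IsEdgeOp z u v (c u v)) :
    ∀ {x y : X} (p : T.Walk x y), p.length = T.dist x y →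
      ∀ a b : X,
      (∀ i < p.length, (T.dist a (p.getVert i) < T.dist a (p.getVert (i + 1)) ↔
        T.dist b (p.getVert i) < T.dist b (p.getVert (i + 1)))) →
      (inner ℂ (delta a) (walkProd c p (delta b)) : ℂ) =
        if a = b then W z ^ ((Finset.range p.length).filter
          (fun i => p.getVert i = a ∨ p.getVert (i + 1) = a)).card else 0 := by
  intro x y p
  induction p with
  | nil =>
    intro hp a b hside
    simp only [walkProd, SimpleGraph.Walk.length_nil, Finset.range_zero, Finset.filter_empty,
      Finset.card_empty, pow_zero, ContinuousLinearMap.one_apply]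
    exact inner_delta a b
  | @cons x x₁ y h q ih =>
    intro hp a b hside
    rw [SimpleGraph.Walk.length_cons] at hp
    have hxx1 : x ≠ x₁ := h.ne
    -- the tail is geodesic
    have hq : q.length = T.dist x₁ y := by
      have t1 : T.dist x y ≤ T.dist x x₁ + T.dist x₁ y := hconn.dist_triangle
      have t2 : T.dist x₁ y ≤ q.length := SimpleGraph.dist_le q
      have t3 : T.dist x x₁ ≤ 1 := le_trans (SimpleGraph.dist_le h.toWalk) (by simp)
      omega
    set P := SimpleGraph.Walk.cons h q with hP
    have hplen : P.length = q.length + 1 := SimpleGraph.Walk.length_cons h q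
    have hd : ∀ i j, i ≤ j → j ≤ q.length + 1 →
        T.dist (P.getVert i) (P.getVert j) = j - i := by
      intro i j h1 h2
      exact getVert_dist_eq hconn P (by rw [hplen]; exact hp) i j h1 (by omega)
    have g0 : P.getVert 0 = x := P.getVert_zero
    have gs : ∀ i, P.getVert (i + 1) = q.getVert i := fun i =>
      SimpleGraph.Walk.getVert_cons_succ q h
    have g1 : P.getVert 1 = x₁ := by
      have := gs 0
      rwa [q.getVert_zero] at this
    have hdx : ∀ k, k ≤ q.length → T.dist x (q.getVert k) = k + 1 := by
      intro k hk
      have := hd 0 (k + 1) (by omega) (by omega)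
      rwa [g0, gs] at this
    have hdx1 : ∀ k, k ≤ q.length → T.dist x₁ (q.getVert k) = k := by
      intro k hk
      have := hd 1 (k + 1) (by omega) (by omega)
      rw [g1, gs] at this
      simpa using this
    have trueside_x : ∀ i, i < q.length →
        T.dist x (q.getVert i) < T.dist x (q.getVert (i + 1)) := by
      intro i hi
      rw [hdx i (by omega), hdx (i + 1) (by omega)]
      omega
    have trueside_x1 : ∀ i, i < q.length →
        T.dist x₁ (q.getVert i) < T.dist x₁ (q.getVert (i + 1)) := by
      intro i hi
      rw [hdx1 i (by omega), hdx1 (i + 1) (by omega)]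
      omega
    have hside' : ∀ i < q.length,
        (T.dist a (q.getVert i) < T.dist a (q.getVert (i + 1)) ↔
         T.dist b (q.getVert i) < T.dist b (q.getVert (i + 1))) := by
      intro i hi
      have := hside (i + 1) (by rw [hplen]; omega)
      rwa [gs, gs] at this
    have edge0 := hside 0 (by rw [hplen]; omega)
    rw [g0, g1] at edge0
    have prod_eq : walkProd c P (delta b) = (c x x₁) (walkProd c q (delta b)) := rfl
    set ξ := walkProd c q (delta b) with hξ
    have hA := hedge x x₁ h
    -- the count of edges incident to a, split off the first edge
    have card_eq : ((Finset.range P.length).filter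
          (fun i => P.getVert i = a ∨ P.getVert (i + 1) = a)).card =
        (if (x = a ∨ x₁ = a) then 1 else 0) +
        ((Finset.range q.length).filter
          (fun i => q.getVert i = a ∨ q.getVert (i + 1) = a)).card := by
      rw [hplen, card_shift]
      congr 1
      · rw [g0, g1]
    -- the tail path never visits x
    have cardq_x : ((Finset.range q.length).filter
        (fun i => q.getVert i = x ∨ q.getVert (i + 1) = x)).card = 0 := by
      rw [Finset.card_eq_zero, Finset.filter_eq_empty_iff]
      intro i hi
      rw [Finset.mem_range] at hi
      rintro (h1 | h2)
      · have := hdx i (by omega); rw [h1, SimpleGraph.dist_self] at this; omega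
      · have := hdx (i + 1) (by omega); rw [h2, SimpleGraph.dist_self] at this; omega
    by_cases hax : a = x
    · -- a = x
      rw [hax] at hside' edge0 ⊢
      rw [prod_eq, edge_inner_left hA hxx1]
      have φx : (inner ℂ (delta x) ξ : ℂ) =
          if x = b then W z ^ ((Finset.range q.length).filter
            (fun i => q.getVert i = x ∨ q.getVert (i + 1) = x)).card else 0 :=
        ih hq x b hside'
      have side_x1b : ∀ i < q.length,
          (T.dist x₁ (q.getVert i) < T.dist x₁ (q.getVert (i + 1)) ↔
           T.dist b (q.getVert i) < T.dist b (q.getVert (i + 1))) := fun i hi =>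
        iff_of_true (trueside_x1 i hi) ((hside' i hi).mp (trueside_x i hi))
      have φx1 : (inner ℂ (delta x₁) ξ : ℂ) =
          if x₁ = b then W z ^ ((Finset.range q.length).filter
            (fun i => q.getVert i = x₁ ∨ q.getVert (i + 1) = x₁)).card else 0 :=
        ih hq x₁ b side_x1b
      rw [hax] at card_eq
      rw [card_eq, φx, φx1]
      by_cases hb : x = b
      · have hb1 : ¬(x₁ = b) := by rw [← hb]; exact fun hh => hxx1 hh.symm
        rw [cardq_x]
        simp [hb, hb1]
      · have hb1 : ¬(x₁ = b) := by
          intro hh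
          have hx : T.dist x x < T.dist x x₁ := by
            rw [SimpleGraph.dist_self]
            exact hconn.pos_dist_of_ne hxx1
          have hbb := edge0.mp hx
          rw [← hh, SimpleGraph.dist_self] at hbb
          omega
        simp [hb, hb1]
    · by_cases hax1 : a = x₁
      · -- a = x₁
        rw [hax1] at hside' edge0 ⊢
        rw [prod_eq, edge_inner_right hA hxx1]
        have φx1 : (inner ℂ (delta x₁) ξ : ℂ) =
            if x₁ = b then W z ^ ((Finset.range q.length).filter
              (fun i => q.getVert i = x₁ ∨ q.getVert (i + 1) = x₁)).card else 0 :=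
          ih hq x₁ b hside'
        have side_xb : ∀ i < q.length,
            (T.dist x (q.getVert i) < T.dist x (q.getVert (i + 1)) ↔
             T.dist b (q.getVert i) < T.dist b (q.getVert (i + 1))) := fun i hi =>
          iff_of_true (trueside_x i hi) ((hside' i hi).mp (trueside_x1 i hi))
        have φx : (inner ℂ (delta x) ξ : ℂ) =
            if x = b then W z ^ ((Finset.range q.length).filter
              (fun i => q.getVert i = x ∨ q.getVert (i + 1) = x)).card else 0 :=
          ih hq x b side_xb
        rw [hax1] at card_eq
        rw [card_eq, φx, φx1]
        by_cases hb : x₁ = b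
        · have hbx : ¬(x = b) := by rw [← hb]; exact hxx1
          simp only [if_pos hb, if_neg hbx]
          simp only [eq_self_iff_true, or_true, if_true]
          rw [Nat.add_comm 1, pow_succ]
          ring
        · have hbx : ¬(x = b) := by
            intro hh
            have hnx : ¬(T.dist x₁ x < T.dist x₁ x₁) := by
              rw [SimpleGraph.dist_self]; omega
            have hnb : ¬(T.dist b x < T.dist b x₁) := fun hcon => hnx (edge0.mpr hcon)
            apply hnb
            rw [← hh, SimpleGraph.dist_self]
            exact hconn.pos_dist_of_ne hxx1
          simp [hb, hbx]
      · -- a ∉ {x, x₁}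
        rw [prod_eq, edge_inner_other hA a hax hax1]
        rw [ih hq a b hside', card_eq]
        have hfalse : ¬(x = a ∨ x₁ = a) := by
          rintro (hh | hh)
          exacts [hax hh.symm, hax1 hh.symm]
        rw [if_neg hfalse, zero_add]

/-- Let `x, y, a, b` be vertices of the tree `T` and suppose that `a`
and `b` lie in the same connected component of `T` minus any edge of the geodesic
edge-path from `x` to `y` (for an edge `{u, u'}` of a tree, a vertex `w` lies on the
`u`-side iff `d(w,u) < d(w,u')`, so "same side" is encoded by the equivalence of these
comparisons for `a` and `b`).  If moreover `a = b`, then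
`⟨c_z(x,y)δ_b, δ_a⟩ = w^ℓ` for all `z ∈ 𝔻`, where `ℓ` is the number of edges of the
geodesic path incident to `a`; and if `a ≠ b`, then `⟨c_z(x,y)δ_b, δ_a⟩ = 0` for all
`z ∈ 𝔻`. -/
theorem matrix_coefficient_same_side {X : Type} [DecidableEq X] (T : SimpleGraph X)
    (hconn : T.Connected) (hacyc : T.IsAcyclic)
    (c : ℂ → X → X → (ell2 X →L[ℂ] ell2 X))
    (hedge : ∀ z ∈ Metric.ball (0 : ℂ) 1, ∀ u v : X, T.Adj u v →
      IsEdgeOp z u v (c z u v))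
    (hgeo : ∀ z ∈ Metric.ball (0 : ℂ) 1, ∀ u v : X, ∀ p : T.Walk u v,
      p.length = T.dist u v → c z u v = walkProd (c z) p)
    (x y a b : X) (p : T.Walk x y) (hp : p.length = T.dist x y)
    (hside : ∀ i < p.length,
      (T.dist a (p.getVert i) < T.dist a (p.getVert (i + 1)) ↔
        T.dist b (p.getVert i) < T.dist b (p.getVert (i + 1)))) :
    ∀ z ∈ Metric.ball (0 : ℂ) 1,
      (a = b →
        (inner ℂ (delta a) (c z x y (delta b)) : ℂ) =
          W z ^ ((Finset.range p.length).filter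
            (fun i => p.getVert i = a ∨ p.getVert (i + 1) = a)).card) ∧
      (a ≠ b → (inner ℂ (delta a) (c z x y (delta b)) : ℂ) = 0) := by
  intro z hz
  have key := main_lemma hconn z (c z) (fun u v huv => hedge z hz u v huv) p hp a b hside
  rw [hgeo z hz x y p hp]
  constructor
  · intro hab
    rw [key, if_pos hab]
  · intro hab
    rw [key, if_neg hab]
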